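/- Suppose ∫₀^∞ (1/a(x))·exp(−2B(x)) dx = ∞. For l ≥ 0 define Ω⁺_l(b,a) = sup_{x>l} ( ∫_lˣ (1/a(y))·exp(−2B(y)) dy ) · ( ∫ₓ^∞ exp(2B(y)) dy ) ∈ [0,∞], and define Ω̂⁺(b,a) = limsup_{x→∞} ( ∫₀ˣ (1/a(y))·exp(−2B(y)) dy ) · ( ∫ₓ^∞ exp(2B(y)) dy ) ∈ [0,∞]. Then lim_{l→∞} Ω⁺_l(b,a) = Ω̂⁺(b,a). -/

import Mathlib

open MeasureTheory Set Filter
open scoped ENNReal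

/-- `B(x) = ∫₀ˣ (b/a)(y) dy`. -/
noncomputable def Bfun (a b : ℝ → ℝ) (x : ℝ) : ℝ := ∫ y in (0:ℝ)..x, b y / a y

/-- `Ω⁺_l(b,a) = sup_{x>l} (∫_lˣ (1/a) e^{-2B}) (∫ₓ^∞ e^{2B}) ∈ [0,∞]`. -/
noncomputable def OmegaPlusL (a b : ℝ → ℝ) (l : ℝ) : ℝ≥0∞ :=
  ⨆ x ∈ Ioi l,
    ENNReal.ofReal (∫ y in l..x, (a y)⁻¹ * Real.exp (-2 * Bfun a b y)) *
      ∫⁻ y in Ioi x, ENNReal.ofReal (Real.exp (2 * Bfun a b y))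

/-- `Ω̂⁺(b,a) = limsup_{x→∞} (∫₀ˣ (1/a) e^{-2B}) (∫ₓ^∞ e^{2B}) ∈ [0,∞]`. -/
noncomputable def OmegaHatPlus (a b : ℝ → ℝ) : ℝ≥0∞ :=
  Filter.limsup
    (fun x : ℝ =>
      ENNReal.ofReal (∫ y in (0:ℝ)..x, (a y)⁻¹ * Real.exp (-2 * Bfun a b y)) *
        ∫⁻ y in Ioi x, ENNReal.ofReal (Real.exp (2 * Bfun a b y)))
    Filter.atTop

lemma Bfun_contOn {a b : ℝ → ℝ} (hcont : ContinuousOn (fun y => b y / a y) (Ici 0)) :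
    ContinuousOn (Bfun a b) (Ici 0) := by
  intro x hx
  have hx0 : (0:ℝ) ≤ x := hx
  have hsub : uIcc (0:ℝ) (x+1) ⊆ Ici 0 := by
    rw [uIcc_of_le (by linarith)]
    exact Icc_subset_Ici_self
  have hi : IntegrableOn (fun y => b y / a y) (uIcc 0 (x+1)) volume :=
    (hcont.mono hsub).integrableOn_compact isCompact_uIcc
  have h := intervalIntegral.continuousOn_primitive_interval hi
  have hx1 : x ∈ uIcc (0:ℝ) (x+1) := by
    rw [uIcc_of_le (by linarith)]; exact ⟨hx0, by linarith⟩
  have hmem : uIcc (0:ℝ) (x+1) ∈ nhdsWithin x (Ici 0) := by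
    rw [uIcc_of_le (by linarith : (0:ℝ) ≤ x+1)]
    have : Icc (0:ℝ) (x+1) = Ici 0 ∩ Iic (x+1) := by
      ext y; simp [mem_Icc, mem_Ici, mem_Iic, and_comm]
    rw [this]
    exact inter_mem self_mem_nhdsWithin
      (mem_nhdsWithin_of_mem_nhds (Iic_mem_nhds (by linarith)))
  exact (h x hx1).mono_of_mem_nhdsWithin hmem

theorem stmt15 (a b : ℝ → ℝ)
    (ha : ContDiffOn ℝ 1 a (Ici 0)) (hapos : ∀ x ∈ Ici (0:ℝ), 0 < a x)
    (hb : ContinuousOn b (Ici 0))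
    (hinf : ∫⁻ x in Ioi (0:ℝ),
        ENNReal.ofReal ((a x)⁻¹ * Real.exp (-2 * Bfun a b x)) = ⊤) :
    Tendsto (fun l => OmegaPlusL a b l) atTop (nhds (OmegaHatPlus a b)) := by
  have hacont : ContinuousOn a (Ici 0) := ha.continuousOn
  have hBc : ContinuousOn (Bfun a b) (Ici 0) :=
    Bfun_contOn (hb.div hacont (fun x hx => (hapos x hx).ne'))
  set f : ℝ → ℝ := fun y => (a y)⁻¹ * Real.exp (-2 * Bfun a b y) with hfdef
  set h : ℝ → ℝ≥0∞ := fun y => ENNReal.ofReal (Real.exp (2 * Bfun a b y)) with hhdef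
  set g : ℝ → ℝ≥0∞ := fun x => ∫⁻ y in Ioi x, h y with hgdef
  have hOm : ∀ l, OmegaPlusL a b l
      = ⨆ x ∈ Ioi l, ENNReal.ofReal (∫ y in l..x, f y) * g x := fun _ => rfl
  have hHatdef : OmegaHatPlus a b
      = limsup (fun x => ENNReal.ofReal (∫ y in (0:ℝ)..x, f y) * g x) atTop := rfl
  have hfc : ContinuousOn f (Ici 0) := by
    exact (hacont.inv₀ (fun x hx => (hapos x hx).ne')).mul
      (Real.continuous_exp.comp_continuousOn (continuousOn_const.mul hBc))
  have hfpos : ∀ y ∈ Ici (0:ℝ), 0 < f y :=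
    fun y hy => mul_pos (inv_pos.2 (hapos y hy)) (Real.exp_pos _)
  have hfint : ∀ {l x : ℝ}, 0 ≤ l → l ≤ x → IntervalIntegrable f volume l x := by
    intro l x hl hlx
    apply (hfc.mono ?_).intervalIntegrable
    rw [uIcc_of_le hlx]
    exact fun y hy => le_trans hl hy.1
  have hsplit : ∀ l x : ℝ, 0 ≤ l → l ≤ x →
      (∫ y in (0:ℝ)..x, f y) = (∫ y in (0:ℝ)..l, f y) + ∫ y in l..x, f y :=
    fun l x h0 hlx =>
      (intervalIntegral.integral_add_adjacent_intervals (hfint le_rfl h0) (hfint h0 hlx)).symm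
  have hFnn : ∀ l x : ℝ, 0 ≤ l → l ≤ x → 0 ≤ ∫ y in l..x, f y := by
    intro l x hl hlx
    exact intervalIntegral.integral_nonneg hlx
      (fun y hy => (hfpos y (le_trans hl hy.1)).le)
  have hFpos : ∀ l x : ℝ, 0 ≤ l → l < x → 0 < ∫ y in l..x, f y := by
    intro l x hl hlx
    exact intervalIntegral.intervalIntegral_pos_of_pos_on (hfint hl hlx.le)
      (fun y hy => hfpos y (le_trans hl hy.1.le)) hlx
  have hcontexp : ContinuousOn (fun y => Real.exp (2 * Bfun a b y)) (Ici 0) :=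
    Real.continuous_exp.comp_continuousOn (continuousOn_const.mul hBc)
  have hIoc_fin : ∀ u v : ℝ, 0 ≤ u → (∫⁻ y in Ioc u v, h y) ≠ ⊤ := by
    intro u v hu
    rcases le_or_gt v u with hvu | huv
    · rw [Ioc_eq_empty hvu.not_gt]; simp
    · obtain ⟨C, hC⟩ := (isCompact_Icc (a := u) (b := v)).exists_bound_of_continuousOn
        (hcontexp.mono (fun y hy => le_trans hu hy.1))
      have hle : (∫⁻ y in Ioc u v, h y) ≤ ENNReal.ofReal C * volume (Ioc u v) := by
        rw [← setLIntegral_const]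
        refine setLIntegral_mono measurable_const (fun y hy => ?_)
        exact ENNReal.ofReal_le_ofReal
          (le_trans (le_abs_self _) (hC y (Ioc_subset_Icc_self hy)))
      refine ne_top_of_le_ne_top ?_ hle
      exact ENNReal.mul_ne_top ENNReal.ofReal_ne_top (by simp [Real.volume_Ioc])
  have hg_anti : Antitone g := fun x y hxy => lintegral_mono_set (Ioi_subset_Ioi hxy)
  by_cases hg0 : g 0 = ⊤
  · -- infinite case
    have hgx : ∀ x : ℝ, 0 ≤ x → g x = ⊤ := by
      intro x hx
      by_contra hne
      have hss : Ioi (0:ℝ) ⊆ Ioc 0 x ∪ Ioi x := fun y hy =>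
        (le_or_gt y x).elim (fun h' => Or.inl ⟨hy, h'⟩) (fun h' => Or.inr h')
      have hle : g 0 ≤ (∫⁻ y in Ioc 0 x, h y) + g x :=
        le_trans (lintegral_mono_set hss) (lintegral_union_le _ _ _)
      rw [hg0] at hle
      exact (ENNReal.add_ne_top.2 ⟨hIoc_fin 0 x le_rfl, hne⟩) (top_le_iff.1 hle)
    have hHat : OmegaHatPlus a b = ⊤ := by
      rw [hHatdef]
      have hev : ∀ᶠ x in atTop,
          (ENNReal.ofReal (∫ y in (0:ℝ)..x, f y) * g x) = (fun _ : ℝ => (⊤:ℝ≥0∞)) x := by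
        filter_upwards [eventually_ge_atTop (1:ℝ)] with x hx
        rw [hgx x (by linarith)]
        refine ENNReal.mul_top ?_
        simp only [ne_eq, ENNReal.ofReal_eq_zero, not_le]
        exact hFpos 0 x le_rfl (by linarith)
      rw [limsup_congr hev, limsup_const]
    have hOmtop : ∀ l : ℝ, 0 ≤ l → OmegaPlusL a b l = ⊤ := by
      intro l hl
      rw [hOm, eq_top_iff]
      have hmemx : l + 1 ∈ Ioi l := by simp [mem_Ioi]
      refine le_trans ?_ (le_iSup₂ (l+1) hmemx)
      rw [hgx (l+1) (by linarith), ENNReal.mul_top]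
      simp only [ne_eq, ENNReal.ofReal_eq_zero, not_le]
      exact hFpos l (l+1) hl (by linarith)
    rw [hHat]
    refine Tendsto.congr' ?_ (tendsto_const_nhds : Tendsto (fun _ : ℝ => (⊤:ℝ≥0∞)) atTop (nhds ⊤))
    filter_upwards [eventually_ge_atTop (0:ℝ)] with l hl
    exact (hOmtop l hl).symm
  · -- finite case
    have hgfin : ∀ x : ℝ, 0 ≤ x → g x ≠ ⊤ := fun x hx => ne_top_of_le_ne_top hg0 (hg_anti hx)
    -- g tends to 0
    have hgtendsto : Tendsto g atTop (nhds 0) := by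
      set c : ℕ → ℝ≥0∞ := fun k => ∫⁻ y in Ioc ((k:ℕ):ℝ) (((k:ℕ):ℝ)+1), h y with hcdef
      have hunion : ∀ n : ℕ, Ioi ((n:ℕ):ℝ) = ⋃ k : ℕ, Ioc (((n+k:ℕ)):ℝ) ((((n+k:ℕ)):ℝ)+1) := by
        intro n; ext y
        simp only [mem_Ioi, mem_iUnion, mem_Ioc]
        constructor
        · intro hy
          set t := y - (n:ℝ) with htdef
          have ht : 0 < t := by simp [htdef]; linarith
          have h1 : 1 ≤ ⌈t⌉₊ := Nat.one_le_ceil_iff.2 ht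
          refine ⟨⌈t⌉₊ - 1, ?_, ?_⟩
          · have : ((⌈t⌉₊:ℝ)) < t + 1 := Nat.ceil_lt_add_one ht.le
            push_cast [Nat.cast_sub h1]
            linarith
          · have : t ≤ (⌈t⌉₊:ℝ) := Nat.le_ceil t
            push_cast [Nat.cast_sub h1]
            linarith
        · rintro ⟨k, hk1, hk2⟩
          push_cast at hk1
          have : (0:ℝ) ≤ k := Nat.cast_nonneg k
          linarith
      have hdisj : ∀ n : ℕ, Pairwise (Function.onFun Disjoint
          (fun k : ℕ => Ioc (((n+k:ℕ)):ℝ) ((((n+k:ℕ)):ℝ)+1))) := by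
        intro n i j hij
        simp only [Function.onFun]
        rw [Set.Ioc_disjoint_Ioc]
        rcases hij.lt_or_gt with hlt | hlt
        · have h1 : ((n+i:ℕ):ℝ) + 1 ≤ ((n+j:ℕ):ℝ) := by
            push_cast
            have : (i:ℝ) + 1 ≤ j := by exact_mod_cast Nat.succ_le_of_lt hlt
            linarith
          exact le_trans (min_le_left _ _) (le_trans h1 (le_max_right _ _))
        · have h1 : ((n+j:ℕ):ℝ) + 1 ≤ ((n+i:ℕ):ℝ) := by
            push_cast
            have : (j:ℝ) + 1 ≤ i := by exact_mod_cast Nat.succ_le_of_lt hlt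
            linarith
          exact le_trans (min_le_right _ _) (le_trans h1 (le_max_left _ _))
      have hgn : ∀ n : ℕ, g ((n:ℕ):ℝ) = ∑' k : ℕ, c (n + k) := by
        intro n
        have : g ((n:ℕ):ℝ) = ∫⁻ y in Ioi ((n:ℕ):ℝ), h y := rfl
        rw [this, hunion n, lintegral_iUnion (fun k => measurableSet_Ioc) (hdisj n)]
      have hsum_ne : (∑' k : ℕ, c k) ≠ ⊤ := by
        have h0 : g ((0:ℕ):ℝ) = ∑' k : ℕ, c (0 + k) := hgn 0
        simp only [Nat.zero_add] at h0
        rw [Nat.cast_zero] at h0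
        rw [← h0]
        exact hg0
      have htail : Tendsto (fun n : ℕ => g ((n:ℕ):ℝ)) atTop (nhds 0) := by
        have ht := ENNReal.tendsto_sum_nat_add c hsum_ne
        refine ht.congr (fun n => ?_)
        rw [hgn n]
        exact tsum_congr (fun k => by rw [Nat.add_comm])
      have hcomp : Tendsto (fun x : ℝ => g ((⌊x⌋₊:ℕ):ℝ)) atTop (nhds 0) :=
        htail.comp tendsto_nat_floor_atTop
      refine tendsto_of_tendsto_of_tendsto_of_le_of_le' tendsto_const_nhds hcomp ?_ ?_
      · exact Eventually.of_forall (fun x => zero_le)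
      · filter_upwards [eventually_ge_atTop (0:ℝ)] with x hx
        exact hg_anti (Nat.floor_le hx)
    have hub : ∀ l : ℝ, 0 ≤ l → OmegaHatPlus a b ≤ OmegaPlusL a b l := by
      intro l hl
      rw [hHatdef, hOm]
      refine ENNReal.le_of_forall_pos_le_add (fun ε hε _ => ?_)
      have hto : Tendsto (fun x => ENNReal.ofReal (∫ y in (0:ℝ)..l, f y) * g x)
          atTop (nhds 0) := by
        have := ENNReal.Tendsto.const_mul (a := ENNReal.ofReal (∫ y in (0:ℝ)..l, f y))
          hgtendsto (Or.inr ENNReal.ofReal_ne_top)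
        simpa using this
      have hev : ∀ᶠ x in atTop,
          ENNReal.ofReal (∫ y in (0:ℝ)..l, f y) * g x < (ε:ℝ≥0∞) :=
        hto.eventually_lt_const (by exact_mod_cast hε)
      refine limsup_le_of_le (by isBoundedDefault) ?_
      filter_upwards [hev, eventually_gt_atTop l] with x hx1 hx2
      have hdec : ENNReal.ofReal (∫ y in (0:ℝ)..x, f y)
          = ENNReal.ofReal (∫ y in (0:ℝ)..l, f y) + ENNReal.ofReal (∫ y in l..x, f y) := by
        rw [hsplit l x hl hx2.le,
          ENNReal.ofReal_add (hFnn 0 l le_rfl hl) (hFnn l x hl hx2.le)]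
      rw [hdec, add_mul]
      refine le_trans (add_le_add hx1.le
        (le_iSup₂ (f := fun x _ => ENNReal.ofReal (∫ y in l..x, f y) * g x) x hx2)) ?_
      exact le_of_eq (add_comm _ _)
    rw [tendsto_order]
    constructor
    · intro L hL
      filter_upwards [eventually_ge_atTop (0:ℝ)] with l hl
      exact lt_of_lt_of_le hL (hub l hl)
    · intro L hL
      obtain ⟨L', hL1, hL2⟩ := exists_between hL
      rw [hHatdef] at hL1
      have hev := eventually_lt_of_limsup_lt hL1
      obtain ⟨x0, hx0⟩ := eventually_atTop.1 hev
      filter_upwards [eventually_ge_atTop (max x0 0)] with l hl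
      have hl0 : (0:ℝ) ≤ l := le_trans (le_max_right _ _) hl
      have hlx0 : x0 ≤ l := le_trans (le_max_left _ _) hl
      have hle : OmegaPlusL a b l ≤ L' := by
        rw [hOm]
        refine iSup₂_le (fun x hx => ?_)
        have hlx : l < x := hx
        have hx' : x0 ≤ x := le_trans hlx0 hlx.le
        have hmono : ENNReal.ofReal (∫ y in l..x, f y)
            ≤ ENNReal.ofReal (∫ y in (0:ℝ)..x, f y) := by
          apply ENNReal.ofReal_le_ofReal
          rw [hsplit l x hl0 hlx.le]
          linarith [hFnn 0 l le_rfl hl0]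
        exact le_trans (mul_le_mul_left hmono _) (hx0 x hx').le
      exact lt_of_le_of_lt hle hL2
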